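/- Let k ≥ 1, let d₁, …, d_k ∈ ℤ and L₁, …, L_k be positive integers, and suppose that both G := {Σᵢ₌₁ᵏ aᵢdᵢ : aᵢ ∈ ℤ, |aᵢ| ≤ Lᵢ} and G'' := {Σᵢ₌₁ᵏ aᵢdᵢ : aᵢ ∈ ℤ, |aᵢ| ≤ 4Lᵢ} are proper generalized arithmetic progressions. Then there exist a constant c depending only on k (one may take c = 4ᵏ·(k+1)!) and integers d₁', …, d_k' such that the map φ : G → ℤ defined by φ(Σᵢ₌₁ᵏ aᵢdᵢ) = Σᵢ₌₁ᵏ aᵢdᵢ' (for |aᵢ| ≤ Lᵢ) is well-defined, is an order-preserving Freiman 2-isomorphism, and satisfies |φ(x)| ≤ c·|G| for every x ∈ G. -/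

import Mathlib

/-- `φ` is an order-preserving Freiman 2-isomorphism on the finite set `A ⊆ ℤ`. -/
def IsOrderPresFreiman2Iso (A : Finset ℤ) (φ : ℤ → ℤ) : Prop :=
  (∀ a ∈ A, ∀ b ∈ A, (a < b ↔ φ a < φ b)) ∧
  (∀ a ∈ A, ∀ b ∈ A, ∀ c ∈ A, ∀ d ∈ A, (a + b = c + d ↔ φ a + φ b = φ c + φ d))

/-- The generalized arithmetic progression `{∑ aᵢdᵢ : |aᵢ| ≤ Lᵢ}`, as a finite set. -/
noncomputable def gap (k : ℕ) (d : Fin k → ℤ) (L : Fin k → ℕ) : Finset ℤ :=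
  (Fintype.piFinset (fun i => Finset.Icc (-(L i : ℤ)) (L i))).image
    (fun a => ∑ i, a i * d i)


open Finset

private def dotR {k : ℕ} (v : Fin k → ℤ) (w : Fin k → ℝ) : ℝ := ∑ i, (v i : ℝ) * w i

private def castR {k : ℕ} (v : Fin k → ℤ) : Fin k → ℝ := fun i => (v i : ℝ)

private def spanT {k : ℕ} (S : Finset (Fin k → ℤ)) (w : Fin k → ℝ) :
    Submodule ℝ (Fin k → ℝ) :=
  Submodule.span ℝ (castR '' {v : Fin k → ℤ | v ∈ S ∧ dotR v w = 1})

private lemma abs_det_le {k : ℕ} (B : Matrix (Fin k) (Fin k) ℤ) (c : Fin k → ℤ)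
    (hc : ∀ i, 0 ≤ c i) (hB : ∀ r j, |B r j| ≤ c j) :
    |B.det| ≤ (Nat.factorial k : ℤ) * ∏ j, c j := by
  rw [Matrix.det_apply]
  refine (Finset.abs_sum_le_sum_abs _ _).trans ?_
  have h1 : ∀ σ : Equiv.Perm (Fin k), |Equiv.Perm.sign σ • ∏ i, B (σ i) i| ≤ ∏ j, c j := by
    intro σ
    have h2 : |Equiv.Perm.sign σ • ∏ i, B (σ i) i| = |∏ i, B (σ i) i| := by
      rcases Int.units_eq_one_or (Equiv.Perm.sign σ) with h | h <;>
        simp [h, Units.smul_def]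
    rw [h2, Finset.abs_prod]
    exact Finset.prod_le_prod (fun i _ => abs_nonneg _) (fun i _ => hB (σ i) i)
  calc ∑ σ : Equiv.Perm (Fin k), |Equiv.Perm.sign σ • ∏ i, B (σ i) i|
      ≤ ∑ _σ : Equiv.Perm (Fin k), ∏ j, c j := Finset.sum_le_sum (fun σ _ => h1 σ)
    _ = (Nat.factorial k : ℤ) * ∏ j, c j := by
        rw [Finset.sum_const, Finset.card_univ, Fintype.card_perm, Fintype.card_fin,
          nsmul_eq_mul]

private lemma exists_vertex {k : ℕ} (S : Finset (Fin k → ℤ))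
    (hspan : ∀ u : Fin k → ℝ, u ≠ 0 → ∃ v ∈ S, dotR v u ≠ 0) :
    ∀ (n : ℕ) (w : Fin k → ℝ), (∀ v ∈ S, 1 ≤ dotR v w) →
      k ≤ n + Module.finrank ℝ (spanT S w) →
      ∃ w', (∀ v ∈ S, 1 ≤ dotR v w') ∧ spanT S w' = ⊤ := by
  intro n
  induction n with
  | zero =>
    intro w hw hrk
    refine ⟨w, hw, Submodule.eq_top_of_finrank_eq ?_⟩
    have h2 : Module.finrank ℝ (spanT S w) ≤ Module.finrank ℝ (Fin k → ℝ) :=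
      Submodule.finrank_le _
    rw [Module.finrank_fintype_fun_eq_card, Fintype.card_fin] at h2 ⊢
    omega
  | succ n ih =>
    intro w hw hrk
    by_cases htop : spanT S w = ⊤
    · exact ⟨w, hw, htop⟩
    · classical
      obtain ⟨φ, hφ0, hφmap⟩ :=
        Submodule.exists_dual_map_eq_bot_of_lt_top (p := spanT S w)
          (lt_top_iff_ne_top.mpr htop) inferInstance
      have hker : ∀ x ∈ spanT S w, φ x = 0 := by
        intro x hx
        have hmem : φ x ∈ (spanT S w).map φ := Submodule.mem_map_of_mem hx
        rw [hφmap] at hmem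
        simpa using hmem
      set u0 : Fin k → ℝ := fun i => φ (fun j => if i = j then 1 else 0) with hu0
      have hrepr : ∀ x : Fin k → ℝ, φ x = ∑ i, x i * u0 i := by
        intro x
        rw [LinearMap.pi_apply_eq_sum_univ φ x]
        simp [hu0, smul_eq_mul]
      have hu0ne : u0 ≠ 0 := by
        intro h
        refine hφ0 (LinearMap.ext fun x => ?_)
        rw [hrepr x]
        simp [show ∀ i, u0 i = 0 from fun i => congrFun h i]
      obtain ⟨u, huorth, v₁, hv₁S, hv₁neg⟩ :
          ∃ u : Fin k → ℝ, (∀ x ∈ spanT S w, ∑ i, x i * u i = 0) ∧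
            ∃ v₁ ∈ S, dotR v₁ u < 0 := by
        obtain ⟨v₁, hv₁S, hv₁⟩ := hspan u0 hu0ne
        rcases hv₁.lt_or_gt with h | h
        · exact ⟨u0, fun x hx => by rw [← hrepr]; exact hker x hx, v₁, hv₁S, h⟩
        · refine ⟨-u0, ?_, v₁, hv₁S, ?_⟩
          · intro x hx
            have := hker x hx
            rw [hrepr x] at this
            simpa [mul_neg, Finset.sum_neg_distrib] using this
          · have : dotR v₁ (-u0) = -dotR v₁ u0 := by
              simp [dotR, mul_neg, Finset.sum_neg_distrib]
            rw [this]
            linarith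
      set Neg := S.filter (fun v => dotR v u < 0) with hNeg
      have hNegne : Neg.Nonempty := ⟨v₁, Finset.mem_filter.mpr ⟨hv₁S, hv₁neg⟩⟩
      set t := Neg.inf' hNegne (fun v => (dotR v w - 1) / (-(dotR v u))) with ht
      have ht0 : 0 ≤ t := by
        apply Finset.le_inf'
        intro b hb
        rw [hNeg, Finset.mem_filter] at hb
        exact div_nonneg (by linarith [hw b hb.1]) (by linarith [hb.2])
      set w' : Fin k → ℝ := fun i => w i + t * u i with hw'
      have hdot' : ∀ v : Fin k → ℤ, dotR v w' = dotR v w + t * dotR v u := by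
        intro v
        simp only [dotR, hw', mul_add]
        rw [Finset.sum_add_distrib]
        congr 1
        rw [Finset.mul_sum]
        exact Finset.sum_congr rfl (fun i _ => by ring)
      have hfeas' : ∀ v ∈ S, 1 ≤ dotR v w' := by
        intro v hv
        rcases le_or_gt 0 (dotR v u) with h | h
        · rw [hdot' v]
          have := hw v hv
          nlinarith [mul_nonneg ht0 h]
        · have hvNeg : v ∈ Neg := Finset.mem_filter.mpr ⟨hv, h⟩
          have hte : t ≤ (dotR v w - 1) / (-(dotR v u)) := Finset.inf'_le _ hvNeg
          rw [hdot' v]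
          rw [le_div_iff₀ (by linarith)] at hte
          nlinarith
      obtain ⟨v₀, hv₀Neg, hv₀t⟩ :=
        Finset.exists_mem_eq_inf' hNegne (fun v => (dotR v w - 1) / (-(dotR v u)))
      have hv₀S : v₀ ∈ S := (Finset.mem_filter.mp hv₀Neg).1
      have hv₀u : dotR v₀ u < 0 := (Finset.mem_filter.mp hv₀Neg).2
      have hv₀tight : dotR v₀ w' = 1 := by
        have hdune : dotR v₀ u ≠ 0 := ne_of_lt hv₀u
        have hkey : (dotR v₀ w - 1) / -dotR v₀ u * dotR v₀ u = -(dotR v₀ w - 1) := by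
          rw [div_mul_eq_mul_div, div_neg, mul_div_assoc, div_self hdune, mul_one]
        rw [hdot' v₀, ht, hv₀t, hkey]
        ring
      have horthtight : ∀ v : Fin k → ℤ, v ∈ S → dotR v w = 1 → dotR v u = 0 := by
        intro v hvS hv1
        have : castR v ∈ spanT S w :=
          Submodule.subset_span ⟨v, ⟨hvS, hv1⟩, rfl⟩
        exact huorth _ this
      have hsub : spanT S w ≤ spanT S w' := by
        apply Submodule.span_mono
        apply Set.image_mono
        rintro v ⟨hvS, hv1⟩
        refine ⟨hvS, ?_⟩
        rw [hdot' v, horthtight v hvS hv1, hv1]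
        ring
      have hv₀mem : castR v₀ ∈ spanT S w' :=
        Submodule.subset_span ⟨v₀, ⟨hv₀S, hv₀tight⟩, rfl⟩
      have hv₀nmem : castR v₀ ∉ spanT S w := by
        intro hmem
        have h0 := huorth _ hmem
        have : dotR v₀ u = 0 := h0
        linarith
      have hlt : spanT S w < spanT S w' :=
        lt_of_le_of_ne hsub (fun h => hv₀nmem (h ▸ hv₀mem))
      have hrk' : Module.finrank ℝ (spanT S w) < Module.finrank ℝ (spanT S w') :=
        Submodule.finrank_lt_finrank_of_lt hlt
      exact ih w' hfeas' (by omega)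

private lemma key_lemma {k : ℕ} (S : Finset (Fin k → ℤ)) (M : Fin k → ℤ)
    (hM : ∀ i, 0 ≤ M i) (hbox : ∀ v ∈ S, ∀ i, |v i| ≤ M i)
    (hspan : ∀ u : Fin k → ℝ, u ≠ 0 → ∃ v ∈ S, dotR v u ≠ 0)
    (w₀ : Fin k → ℝ) (hw₀ : ∀ v ∈ S, 1 ≤ dotR v w₀) :
    ∃ d' : Fin k → ℤ, (∀ v ∈ S, 0 < ∑ i, v i * d' i) ∧
      ∀ i, |d' i| ≤ (Nat.factorial k : ℤ) * ∏ j ∈ Finset.univ.erase i, M j := by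
  classical
  obtain ⟨w, hwfeas, hwtop⟩ := exists_vertex S hspan k w₀ hw₀ (by omega)
  obtain ⟨b, hbT, hbspan, hbli⟩ :=
    exists_linearIndependent ℝ (castR '' {v : Fin k → ℤ | v ∈ S ∧ dotR v w = 1})
  have hbspan' : Submodule.span ℝ b = ⊤ := hbspan.trans hwtop
  have hfin : b.Finite := hbli.setFinite
  haveI := hfin.fintype
  let B : Module.Basis b ℝ (Fin k → ℝ) := Module.Basis.mk hbli (by rw [Subtype.range_coe, hbspan'])
  have hcard : Fintype.card b = k := by
    have h := Module.finrank_eq_card_basis B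
    rw [Module.finrank_fintype_fun_eq_card, Fintype.card_fin] at h
    omega
  let e : Fin k ≃ b := (Fintype.equivFinOfCardEq hcard).symm
  have hrow : ∀ i : Fin k, ∃ v : Fin k → ℤ,
      (v ∈ S ∧ dotR v w = 1) ∧ castR v = ((e i : Fin k → ℝ)) := by
    intro i
    obtain ⟨v, hv, hcast⟩ := hbT (e i).2
    exact ⟨v, hv, hcast⟩
  choose A hA using hrow
  let Az : Matrix (Fin k) (Fin k) ℤ := Matrix.of A
  let Ar : Matrix (Fin k) (Fin k) ℝ := Az.map Int.cast
  have hArrow : ∀ i, Ar i = ((e i : Fin k → ℝ)) := by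
    intro i
    funext j
    exact congrFun (hA i).2 j
  have hli' : LinearIndependent ℝ (fun i => Ar i) := by
    have hB : (fun i => Ar i) = fun i => (B.reindex e.symm) i := by
      funext i
      rw [Module.Basis.reindex_apply, Equiv.symm_symm, hArrow i]
      exact (Module.Basis.mk_apply hbli _ (e i)).symm
    rw [hB]
    exact (B.reindex e.symm).linearIndependent
  have hUnit : IsUnit Ar := Matrix.linearIndependent_rows_iff_isUnit.mp hli'
  have hdetR : Ar.det ≠ 0 := by
    intro h
    rw [Matrix.isUnit_iff_isUnit_det, h] at hUnit
    simpa using hUnit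
  have hdetcast : ((Az.det : ℤ) : ℝ) = Ar.det := by
    have h := RingHom.map_det (Int.castRingHom ℝ) Az
    simpa [RingHom.mapMatrix_apply, Int.coe_castRingHom] using h
  have hdetZ : Az.det ≠ 0 := by
    intro h
    apply hdetR
    rw [← hdetcast, h]
    simp
  have hAw : Ar.mulVec w = fun _ => 1 := by
    funext i
    have h1 := (hA i).1.2
    simpa [dotR, Matrix.mulVec, dotProduct, Ar, Az, mul_comm] using h1
  set u0 : Fin k → ℤ := Matrix.cramer Az (fun _ => 1) with hu0
  have hAu : Az.mulVec u0 = Az.det • (fun _ => (1:ℤ)) := Matrix.mulVec_cramer Az _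
  have hcastu : (fun i => ((u0 i : ℤ) : ℝ)) = fun i => (Az.det : ℝ) * w i := by
    have h1 : Ar.mulVec (fun i => ((u0 i : ℤ) : ℝ)) = Ar.mulVec ((Az.det : ℝ) • w) := by
      funext i
      have h2 := congrFun hAu i
      have hL : (Ar.mulVec (fun i => ((u0 i : ℤ) : ℝ))) i = ((Az.mulVec u0) i : ℝ) := by
        simp only [Matrix.mulVec, dotProduct, Ar, Matrix.map_apply]
        push_cast
        rfl
      have hRR : (Ar.mulVec ((Az.det : ℝ) • w)) i = (Az.det : ℝ) := by
        rw [Matrix.mulVec_smul, hAw]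
        simp
      rw [hL, hRR, h2]
      simp
    have hinj : Function.Injective (Ar.mulVec) :=
      Matrix.mulVec_injective_iff_isUnit.mpr hUnit
    have := hinj h1
    funext i
    have h3 := congrFun this i
    simpa using h3
  have hdotu0 : ∀ v : Fin k → ℤ, ((∑ i, v i * u0 i : ℤ) : ℝ) = (Az.det : ℝ) * dotR v w := by
    intro v
    rw [Int.cast_sum]; simp only [Int.cast_mul]
    calc ∑ i, (v i : ℝ) * (u0 i : ℝ) = ∑ i, (v i : ℝ) * ((Az.det : ℝ) * w i) := by
          refine Finset.sum_congr rfl fun i _ => ?_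
          rw [congrFun hcastu i]
      _ = (Az.det : ℝ) * dotR v w := by
          rw [dotR, Finset.mul_sum]
          exact Finset.sum_congr rfl fun i _ => by ring
  have hbnd : ∀ i, |u0 i| ≤ (Nat.factorial k : ℤ) * ∏ j ∈ Finset.univ.erase i, M j := by
    intro i
    rw [hu0, Matrix.cramer_apply]
    have h := abs_det_le (Az.updateCol i (fun _ => 1))
      (fun j => if j = i then 1 else M j)
      (fun j => by by_cases h : j = i <;> simp [h, hM j])
      (fun r j => by
        by_cases h : j = i
        · simp [h, Matrix.updateCol_apply]
        · simp only [Matrix.updateCol_apply, h, if_false]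
          exact hbox (A r) (hA r).1.1 j)
    refine h.trans (le_of_eq ?_)
    congr 1
    rw [← Finset.mul_prod_erase Finset.univ _ (Finset.mem_univ i)]
    rw [if_pos rfl, one_mul]
    exact Finset.prod_congr rfl fun j hj => if_neg (Finset.ne_of_mem_erase hj)
  rcases hdetZ.lt_or_gt with hdet | hdet
  · refine ⟨fun i => -u0 i, ?_, ?_⟩
    · intro v hv
      have h1 : (∑ i, v i * (-u0 i)) = -(∑ i, v i * u0 i) := by
        simp [mul_neg, Finset.sum_neg_distrib]
      have hw1 := hwfeas v hv
      have hdet' : ((Az.det : ℝ)) < 0 := by exact_mod_cast hdet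
      have h2 : ((∑ i, v i * u0 i : ℤ) : ℝ) < 0 := by
        rw [hdotu0 v]; nlinarith
      have h3 : (∑ i, v i * u0 i) < 0 := by exact_mod_cast h2
      rw [h1]; linarith
    · intro i
      rw [abs_neg]
      exact hbnd i
  · refine ⟨u0, ?_, hbnd⟩
    intro v hv
    have hw1 := hwfeas v hv
    have hdet' : (0:ℝ) < ((Az.det : ℝ)) := by exact_mod_cast hdet
    have h2 : (0:ℝ) < ((∑ i, v i * u0 i : ℤ) : ℝ) := by
      rw [hdotu0 v]; nlinarith
    exact_mod_cast h2

/-- For every `k ≥ 1` there is a constant `c` depending only on `k`, with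
`c ≤ 4^k (k+1)!`, such that: if both `G = {∑ aᵢdᵢ : |aᵢ| ≤ Lᵢ}` and
`G'' = {∑ aᵢdᵢ : |aᵢ| ≤ 4Lᵢ}` are proper, then there are integers `d₁', …, d_k'`
such that `φ(∑ aᵢdᵢ) = ∑ aᵢdᵢ'` is well-defined on `G`, is an order-preserving
Freiman 2-isomorphism, and `|φ(x)| ≤ c|G|` for all `x ∈ G`. -/
theorem convex_geometry_lemma :
    ∀ k : ℕ, 1 ≤ k → ∃ c : ℝ, 0 < c ∧ c ≤ (4 : ℝ) ^ k * (Nat.factorial (k + 1)) ∧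
      ∀ (d : Fin k → ℤ) (L : Fin k → ℕ), (∀ i, 0 < L i) →
        Set.InjOn (fun a : Fin k → ℤ => ∑ i, a i * d i)
          {a | ∀ i, |a i| ≤ (L i : ℤ)} →
        Set.InjOn (fun a : Fin k → ℤ => ∑ i, a i * d i)
          {a | ∀ i, |a i| ≤ 4 * (L i : ℤ)} →
        ∃ (d' : Fin k → ℤ) (φ : ℤ → ℤ),
          (∀ a : Fin k → ℤ, (∀ i, |a i| ≤ (L i : ℤ)) →
            φ (∑ i, a i * d i) = ∑ i, a i * d' i) ∧
          IsOrderPresFreiman2Iso (gap k d L) φ ∧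
          ∀ x ∈ gap k d L, (|φ x| : ℝ) ≤ c * ((gap k d L).card : ℝ) := by
  intro k hk
  refine ⟨(4 : ℝ) ^ k * (Nat.factorial (k + 1)), by positivity, le_refl _, ?_⟩
  intro d L hL hinj1 hinj4
  classical
  have hL1 : ∀ i, (1:ℤ) ≤ (L i : ℤ) := fun i => by exact_mod_cast hL i
  have habs_sub : ∀ x y : ℤ, |x - y| ≤ |x| + |y| := fun x y => by
    calc |x - y| = |x + -y| := by ring_nf
      _ ≤ |x| + |-y| := abs_add_le _ _
      _ = |x| + |y| := by rw [abs_neg]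
  -- the positive side of the 4L-box
  set S : Finset (Fin k → ℤ) :=
    (Fintype.piFinset (fun i => Finset.Icc (-(4*(L i:ℤ))) (4*(L i:ℤ)))).filter
      (fun v => 0 < ∑ i, v i * d i) with hS
  have hSmem : ∀ v : Fin k → ℤ,
      v ∈ S ↔ (∀ i, |v i| ≤ 4*(L i:ℤ)) ∧ 0 < ∑ i, v i * d i := by
    intro v
    rw [hS, Finset.mem_filter, Fintype.mem_piFinset]
    simp only [Finset.mem_Icc, abs_le]
  have hzero_mem : (0 : Fin k → ℤ) ∈ {a : Fin k → ℤ | ∀ i, |a i| ≤ 4 * (L i : ℤ)} := by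
    intro i
    simp only [Pi.zero_apply, abs_zero]
    have := hL1 i; linarith
  have hsingle_sum : ∀ (s : ℤ) (i : Fin k) (c : Fin k → ℤ),
      (∑ j, (if j = i then s else 0) * c j) = s * c i := by
    intro s i c
    rw [Finset.sum_eq_single i]
    · rw [if_pos rfl]
    · intro b _ hb; rw [if_neg hb, zero_mul]
    · intro h; exact absurd (Finset.mem_univ i) h
  have hsingle_mem : ∀ (s : ℤ) (i : Fin k), |s| ≤ 1 →
      (fun j => if j = i then s else 0) ∈ {a : Fin k → ℤ | ∀ j, |a j| ≤ 4 * (L j : ℤ)} := by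
    intro s i hs j
    show |if j = i then s else 0| ≤ 4 * (L j : ℤ)
    by_cases h : j = i
    · rw [h, if_pos rfl]
      have := hL1 i
      linarith
    · rw [if_neg h]
      simp only [abs_zero]
      have := hL1 j; linarith
  have hd0 : ∀ i, d i ≠ 0 := by
    intro i hdi
    have h1 := hsingle_mem 1 i (by norm_num)
    have heq : (fun a : Fin k → ℤ => ∑ j, a j * d j) (fun j => if j = i then (1:ℤ) else 0) =
        (fun a : Fin k → ℤ => ∑ j, a j * d j) (0 : Fin k → ℤ) := by
      simp only
      rw [hsingle_sum]
      simp [hdi]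
    have h2 := hinj4 h1 hzero_mem heq
    have h3 := congrFun h2 i
    simp at h3
  -- the span hypothesis for the key lemma
  have hspan : ∀ u : Fin k → ℝ, u ≠ 0 → ∃ v ∈ S, dotR v u ≠ 0 := by
    intro u hu
    obtain ⟨i, hi⟩ := Function.ne_iff.mp hu
    simp only [Pi.zero_apply] at hi
    set s : ℤ := if 0 < d i then 1 else -1 with hs
    have hs1 : |s| ≤ 1 := by rw [hs]; split <;> norm_num
    refine ⟨fun j => if j = i then s else 0, ?_, ?_⟩
    · rw [hSmem]
      refine ⟨hsingle_mem s i hs1, ?_⟩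
      rw [hsingle_sum]
      rcases (hd0 i).lt_or_gt with h | h
      · rw [hs, if_neg (not_lt.mpr h.le)]; linarith
      · rw [hs, if_pos h]; linarith
    · have hdot : dotR (fun j => if j = i then s else 0) u = (s:ℝ) * u i := by
        rw [dotR, Finset.sum_eq_single i]
        · rw [if_pos rfl]
        · intro b _ hb; rw [if_neg hb]; simp
        · intro h; exact absurd (Finset.mem_univ i) h
      rw [hdot]
      have : (s:ℝ) ≠ 0 := by
        rw [hs]; split <;> norm_num
      exact mul_ne_zero this hi
  -- feasibility of d itself
  have hw₀ : ∀ v ∈ S, 1 ≤ dotR v (fun i => (d i : ℝ)) := by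
    intro v hv
    rw [hSmem] at hv
    have h1 : (1:ℤ) ≤ ∑ i, v i * d i := hv.2
    have h2 : dotR v (fun i => (d i:ℝ)) = ((∑ i, v i * d i : ℤ) : ℝ) := by
      rw [dotR]; push_cast; rfl
    rw [h2]; exact_mod_cast h1
  obtain ⟨d', hpos, hbnd⟩ := key_lemma S (fun i => 4*(L i:ℤ))
    (fun i => by show (0:ℤ) ≤ 4*(L i:ℤ); have := hL1 i; linarith)
    (fun v hv i => ((hSmem v).mp hv).1 i) hspan _ hw₀
  -- linearity helpers
  have hfadd : ∀ (c a b : Fin k → ℤ),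
      (∑ i, (a + b) i * c i) = (∑ i, a i * c i) + ∑ i, b i * c i := by
    intro c a b
    rw [← Finset.sum_add_distrib]
    exact Finset.sum_congr rfl fun i _ => by simp [Pi.add_apply]; ring
  have hfsub : ∀ (c a b : Fin k → ℤ),
      (∑ i, (a - b) i * c i) = (∑ i, a i * c i) - ∑ i, b i * c i := by
    intro c a b
    rw [← Finset.sum_sub_distrib]
    exact Finset.sum_congr rfl fun i _ => by simp [Pi.sub_apply]; ring
  have hfneg : ∀ (c a : Fin k → ℤ), (∑ i, (-a) i * c i) = -∑ i, a i * c i := by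
    intro c a
    rw [← Finset.sum_neg_distrib]
    exact Finset.sum_congr rfl fun i _ => by simp [Pi.neg_apply]
  -- sign lemmas on the 4L-box
  have hfzero : ∀ v : Fin k → ℤ, (∀ i, |v i| ≤ 4*(L i:ℤ)) →
      (∑ i, v i * d i) = 0 → v = 0 := by
    intro v hv h0
    refine hinj4 hv hzero_mem ?_
    simp only
    rw [h0]
    simp
  have hnegbox : ∀ v : Fin k → ℤ, (∀ i, |v i| ≤ 4*(L i:ℤ)) →
      (∀ i, |(-v) i| ≤ 4*(L i:ℤ)) := by
    intro v hv i
    simp only [Pi.neg_apply, abs_neg]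
    exact hv i
  have hgpos : ∀ v : Fin k → ℤ, (∀ i, |v i| ≤ 4*(L i:ℤ)) →
      (0 < ∑ i, v i * d i ↔ 0 < ∑ i, v i * d' i) := by
    intro v hv
    constructor
    · intro h
      exact hpos v ((hSmem v).mpr ⟨hv, h⟩)
    · intro h
      rcases lt_trichotomy (∑ i, v i * d i) 0 with h1 | h1 | h1
      · exfalso
        have h2 : 0 < ∑ i, (-v) i * d i := by rw [hfneg]; linarith
        have h3 := hpos (-v) ((hSmem _).mpr ⟨hnegbox v hv, h2⟩)
        rw [hfneg] at h3
        linarith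
      · exfalso
        have h2 : v = 0 := hfzero v hv h1
        rw [h2] at h
        simp at h
      · exact h1
  have hgzero : ∀ v : Fin k → ℤ, (∀ i, |v i| ≤ 4*(L i:ℤ)) →
      ((∑ i, v i * d i) = 0 ↔ (∑ i, v i * d' i) = 0) := by
    intro v hv
    constructor
    · intro h
      have h2 : v = 0 := hfzero v hv h
      rw [h2]; simp
    · intro h
      rcases lt_trichotomy (∑ i, v i * d i) 0 with h1 | h1 | h1
      · exfalso
        have h2 : 0 < ∑ i, (-v) i * d i := by rw [hfneg]; linarith
        have h3 := hpos (-v) ((hSmem _).mpr ⟨hnegbox v hv, h2⟩)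
        rw [hfneg] at h3
        linarith
      · exact h1
      · exfalso
        have h3 := hpos v ((hSmem v).mpr ⟨hv, h1⟩)
        linarith
  -- comparison lemmas on the 2L-box
  have hbox_sub : ∀ a b : Fin k → ℤ, (∀ i, |a i| ≤ 2*(L i:ℤ)) → (∀ i, |b i| ≤ 2*(L i:ℤ)) →
      ∀ i, |(b - a) i| ≤ 4*(L i:ℤ) := by
    intro a b ha hb i
    simp only [Pi.sub_apply]
    have h1 := habs_sub (b i) (a i)
    have h2 := ha i
    have h3 := hb i
    linarith
  have hglt : ∀ a b : Fin k → ℤ, (∀ i, |a i| ≤ 2*(L i:ℤ)) → (∀ i, |b i| ≤ 2*(L i:ℤ)) →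
      ((∑ i, a i * d i) < (∑ i, b i * d i) ↔ (∑ i, a i * d' i) < ∑ i, b i * d' i) := by
    intro a b ha hb
    have h1 := hgpos (b - a) (hbox_sub a b ha hb)
    rw [hfsub d b a, hfsub d' b a] at h1
    constructor
    · intro h; have := h1.mp (by linarith); linarith
    · intro h; have := h1.mpr (by linarith); linarith
  have hgeq : ∀ a b : Fin k → ℤ, (∀ i, |a i| ≤ 2*(L i:ℤ)) → (∀ i, |b i| ≤ 2*(L i:ℤ)) →
      ((∑ i, a i * d i) = (∑ i, b i * d i) ↔ (∑ i, a i * d' i) = ∑ i, b i * d' i) := by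
    intro a b ha hb
    have h1 := hgzero (b - a) (hbox_sub a b ha hb)
    rw [hfsub d b a, hfsub d' b a] at h1
    constructor
    · intro h; have := h1.mp (by linarith); linarith
    · intro h; have := h1.mpr (by linarith); linarith
  -- definition of φ
  set φ : ℤ → ℤ := fun x =>
    if h : ∃ a : Fin k → ℤ, (∀ i, |a i| ≤ (L i:ℤ)) ∧ (∑ i, a i * d i) = x then
      ∑ i, h.choose i * d' i
    else 0
    with hφ
  have hφval : ∀ a : Fin k → ℤ, (∀ i, |a i| ≤ (L i:ℤ)) →
      φ (∑ i, a i * d i) = ∑ i, a i * d' i := by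
    intro a ha
    have hex : ∃ b : Fin k → ℤ, (∀ i, |b i| ≤ (L i:ℤ)) ∧ (∑ i, b i * d i) = ∑ i, a i * d i :=
      ⟨a, ha, rfl⟩
    rw [hφ]
    simp only [dif_pos hex]
    have hspec := hex.choose_spec
    have hc : hex.choose = a := hinj1 hspec.1 ha hspec.2
    rw [hc]
  -- membership in the gap
  have hgapmem : ∀ x, x ∈ gap k d L →
      ∃ a : Fin k → ℤ, (∀ i, |a i| ≤ (L i:ℤ)) ∧ (∑ i, a i * d i) = x := by
    intro x hx
    rw [gap, Finset.mem_image] at hx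
    obtain ⟨a, ha, rfl⟩ := hx
    rw [Fintype.mem_piFinset] at ha
    refine ⟨a, fun i => ?_, rfl⟩
    have := ha i
    rw [Finset.mem_Icc] at this
    rw [abs_le]
    exact this
  have hLbox2 : ∀ a : Fin k → ℤ, (∀ i, |a i| ≤ (L i:ℤ)) → ∀ i, |a i| ≤ 2*(L i:ℤ) := by
    intro a ha i
    have := ha i
    have := hL1 i
    linarith
  refine ⟨d', φ, hφval, ⟨?_, ?_⟩, ?_⟩
  · -- order preserving
    intro a ha b hb
    obtain ⟨va, hva, rfl⟩ := hgapmem a ha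
    obtain ⟨vb, hvb, rfl⟩ := hgapmem b hb
    rw [hφval va hva, hφval vb hvb]
    exact hglt va vb (hLbox2 va hva) (hLbox2 vb hvb)
  · -- Freiman 2-isomorphism
    intro a ha b hb c hc e he
    obtain ⟨va, hva, rfl⟩ := hgapmem a ha
    obtain ⟨vb, hvb, rfl⟩ := hgapmem b hb
    obtain ⟨vc, hvc, rfl⟩ := hgapmem c hc
    obtain ⟨ve, hve, rfl⟩ := hgapmem e he
    rw [hφval va hva, hφval vb hvb, hφval vc hvc, hφval ve hve]
    have hab : ∀ i, |(va + vb) i| ≤ 2*(L i:ℤ) := by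
      intro i
      simp only [Pi.add_apply]
      have h1 := abs_add_le (va i) (vb i)
      have h2 := hva i
      have h3 := hvb i
      linarith
    have hce : ∀ i, |(vc + ve) i| ≤ 2*(L i:ℤ) := by
      intro i
      simp only [Pi.add_apply]
      have h1 := abs_add_le (vc i) (ve i)
      have h2 := hvc i
      have h3 := hve i
      linarith
    have h1 := hgeq (va + vb) (vc + ve) hab hce
    rw [hfadd d va vb, hfadd d' va vb, hfadd d vc ve, hfadd d' vc ve] at h1
    exact h1
  · -- size bound
    intro x hx
    obtain ⟨va, hva, rfl⟩ := hgapmem x hx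
    rw [hφval va hva]
    -- cardinality of the gap
    have hcard : (gap k d L).card = ∏ i, (2 * L i + 1) := by
      rw [gap, Finset.card_image_of_injOn, Fintype.card_piFinset]
      · refine Finset.prod_congr rfl fun i _ => ?_
        rw [Int.card_Icc]
        omega
      · refine Set.InjOn.mono ?_ hinj1
        intro a ha
        rw [Finset.mem_coe, Fintype.mem_piFinset] at ha
        intro i
        have := ha i
        rw [Finset.mem_Icc] at this
        rw [abs_le]
        exact this
    -- integer bound
    have hterm : ∀ i, (L i:ℤ) * |d' i| ≤
        (Nat.factorial k : ℤ) * ((4:ℤ)^k * ∏ j, (2*(L j:ℤ)+1)) := by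
      intro i
      have h3 := hbnd i
      have hL0 : (0:ℤ) ≤ (L i:ℤ) := by have := hL1 i; linarith
      have h4 : (L i:ℤ) * |d' i| ≤
          (L i:ℤ) * ((Nat.factorial k:ℤ) * ∏ j ∈ Finset.univ.erase i, (4*(L j:ℤ))) :=
        mul_le_mul_of_nonneg_left h3 hL0
      have hprod_nonneg : (0:ℤ) ≤ ∏ j ∈ Finset.univ.erase i, (4*(L j:ℤ)) :=
        Finset.prod_nonneg fun j _ => by have := hL1 j; linarith
      have h5 : (L i:ℤ) * ∏ j ∈ Finset.univ.erase i, (4*(L j:ℤ)) ≤ ∏ j, (4*(L j:ℤ)) := by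
        rw [← Finset.mul_prod_erase Finset.univ (fun j => 4*(L j:ℤ)) (Finset.mem_univ i)]
        have := hL1 i
        nlinarith
      have h6 : (∏ j, (4*(L j:ℤ))) ≤ (4:ℤ)^k * ∏ j, (2*(L j:ℤ)+1) := by
        have h7 : (∏ j, (4*(L j:ℤ))) ≤ ∏ j, (4*(2*(L j:ℤ)+1)) := by
          refine Finset.prod_le_prod (fun j _ => by have := hL1 j; linarith)
            (fun j _ => by have := hL1 j; linarith)
        refine h7.trans (le_of_eq ?_)
        rw [Finset.prod_mul_distrib, Finset.prod_const, Finset.card_univ, Fintype.card_fin]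
      have hfact : (0:ℤ) ≤ (Nat.factorial k : ℤ) := by positivity
      calc (L i:ℤ) * |d' i|
          ≤ (L i:ℤ) * ((Nat.factorial k:ℤ) * ∏ j ∈ Finset.univ.erase i, (4*(L j:ℤ))) := h4
        _ = (Nat.factorial k:ℤ) * ((L i:ℤ) * ∏ j ∈ Finset.univ.erase i, (4*(L j:ℤ))) := by ring
        _ ≤ (Nat.factorial k:ℤ) * ((4:ℤ)^k * ∏ j, (2*(L j:ℤ)+1)) :=
            mul_le_mul_of_nonneg_left (h5.trans h6) hfact
    have hZ : |∑ i, va i * d' i| ≤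
        ((4:ℤ)^k * (Nat.factorial (k+1) : ℤ)) * ∏ j, (2*(L j:ℤ)+1) := by
      have h1 : |∑ i, va i * d' i| ≤ ∑ i, (L i:ℤ) * |d' i| := by
        refine (Finset.abs_sum_le_sum_abs _ _).trans ?_
        refine Finset.sum_le_sum fun i _ => ?_
        rw [abs_mul]
        exact mul_le_mul_of_nonneg_right (hva i) (abs_nonneg _)
      have h2 : (∑ i, (L i:ℤ) * |d' i|) ≤
          ∑ _i : Fin k, (Nat.factorial k : ℤ) * ((4:ℤ)^k * ∏ j, (2*(L j:ℤ)+1)) :=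
        Finset.sum_le_sum fun i _ => hterm i
      have h3 : (∑ _i : Fin k, (Nat.factorial k : ℤ) * ((4:ℤ)^k * ∏ j, (2*(L j:ℤ)+1))) =
          (k : ℤ) * ((Nat.factorial k : ℤ) * ((4:ℤ)^k * ∏ j, (2*(L j:ℤ)+1))) := by
        rw [Finset.sum_const, Finset.card_univ, Fintype.card_fin, nsmul_eq_mul]
      have h4 : (k : ℤ) * (Nat.factorial k : ℤ) ≤ (Nat.factorial (k+1) : ℤ) := by
        have : k * Nat.factorial k ≤ Nat.factorial (k+1) := by
          rw [Nat.factorial_succ]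
          exact Nat.mul_le_mul_right _ (Nat.le_succ k)
        exact_mod_cast this
      have hP : (0:ℤ) ≤ (4:ℤ)^k * ∏ j, (2*(L j:ℤ)+1) := by
        have : (0:ℤ) ≤ ∏ j, (2*(L j:ℤ)+1) :=
          Finset.prod_nonneg fun j _ => by have := hL1 j; linarith
        positivity
      calc |∑ i, va i * d' i| ≤ ∑ i, (L i:ℤ) * |d' i| := h1
        _ ≤ (k : ℤ) * ((Nat.factorial k : ℤ) * ((4:ℤ)^k * ∏ j, (2*(L j:ℤ)+1))) := by
            rw [← h3]; exact h2
        _ = ((k : ℤ) * (Nat.factorial k : ℤ)) * ((4:ℤ)^k * ∏ j, (2*(L j:ℤ)+1)) := by ring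
        _ ≤ (Nat.factorial (k+1) : ℤ) * ((4:ℤ)^k * ∏ j, (2*(L j:ℤ)+1)) :=
            mul_le_mul_of_nonneg_right h4 hP
        _ = ((4:ℤ)^k * (Nat.factorial (k+1) : ℤ)) * ∏ j, (2*(L j:ℤ)+1) := by ring
    have hfin : ((|∑ i, va i * d' i| : ℤ) : ℝ) ≤
        (4:ℝ)^k * (Nat.factorial (k+1)) * ((gap k d L).card : ℝ) := by
      calc ((|∑ i, va i * d' i| : ℤ) : ℝ)
          ≤ ((((4:ℤ)^k * (Nat.factorial (k+1) : ℤ)) * ∏ j, (2*(L j:ℤ)+1) : ℤ) : ℝ) := by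
            exact_mod_cast hZ
        _ = (4:ℝ)^k * (Nat.factorial (k+1)) * ((gap k d L).card : ℝ) := by
            rw [hcard]
            push_cast
            ring
    rw [← Int.cast_abs]
    exact hfin
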